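/- If y, z ∈ [0,1]^n are nondecreasing with y_i ≤ z_i for all i, then m_α(y) ≤ m_α(z), where m_α(z) is the (1-α)-quantile of the random variable m(z,U) = 1 - ∑_{i=1}^n U_i(z_{i+1} - z_i), with U the order statistics of n i.i.d. Uniform[0,1] random variables and z_{n+1} := 1. -/

import Mathlib

open MeasureTheory

noncomputable section

def sortVec {n : ℕ} (x : Fin n → ℝ) : Fin n → ℝ := x ∘ Tuple.sort x

def unifCube (n : ℕ) : Measure (Fin n → ℝ) :=
  Measure.pi fun _ => volume.restrict (Set.Icc (0:ℝ) 1)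

def mInd {n : ℕ} (z u : Fin n → ℝ) : ℝ :=
  1 - ∑ i : Fin n, u i * ((Fin.snoc z 1 : Fin (n+1) → ℝ) i.succ - z i)

def quant (p : ℝ) {Ω : Type*} [MeasurableSpace Ω] (μ : Measure Ω) (Y : Ω → ℝ) : ℝ :=
  sInf {t : ℝ | ENNReal.ofReal p ≤ μ {ω | Y ω ≤ t}}

def mAlpha {n : ℕ} (α : ℝ) (z : Fin n → ℝ) : ℝ :=
  quant (1 - α) (unifCube n) (fun ω => mInd z (sortVec ω))

def betaCDF (a b : ℕ) (p : ℝ) : ℝ :=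
  (Real.Gamma ((a : ℝ) + b) / (Real.Gamma a * Real.Gamma b)) *
    ∫ t in (0:ℝ)..p, t ^ (a - 1) * (1 - t) ^ (b - 1)

def halfBern (k p : ℝ) : Measure ℝ :=
  ENNReal.ofReal p • Measure.dirac k + ENNReal.ofReal (1 - p) • Measure.dirac 1

def consComp (n : ℕ) (z u : ℕ → ℝ) (x : ℝ) : ℝ :=
  if 1 ≤ x then 1
  else WithBot.unbotD 0 (((Finset.Icc 1 n).filter (fun i => z i ≤ x)).image u).max

/-- Extension of a `Fin n` tuple to `ℕ` with value 1 beyond. -/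
def ext1 {n : ℕ} (x : Fin n → ℝ) (j : ℕ) : ℝ := if h : j < n then x ⟨j, h⟩ else 1

lemma snoc_eq {n : ℕ} (x : Fin n → ℝ) (j : Fin (n+1)) :
    (Fin.snoc x (1:ℝ) : Fin (n+1) → ℝ) j = ext1 x (j : ℕ) := by
  rcases j with ⟨j, hj⟩
  simp [Fin.snoc, Fin.castLT, ext1]

lemma mInd_eq_range {n : ℕ} (z u : Fin n → ℝ) :
    mInd z u = 1 - ∑ i ∈ Finset.range n, ext1 u i * (ext1 z (i+1) - ext1 z i) := by
  unfold mInd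
  congr 1
  rw [← Fin.sum_univ_eq_sum_range (fun i => ext1 u i * (ext1 z (i+1) - ext1 z i)) n]
  refine Finset.sum_congr rfl fun i _ => ?_
  rw [snoc_eq]
  simp [ext1, i.isLt, Fin.val_succ]

lemma abel_aux (U W : ℕ → ℝ) (hU : ∀ i, 0 ≤ U i) (hUmono : ∀ i, U i ≤ U (i+1))
    (hW : ∀ i, 0 ≤ W i) :
    ∀ n, 0 ≤ (∑ i ∈ Finset.range n, U i * (W i - W (i+1))) + U n * W n := by
  intro n
  induction n with
  | zero => simpa using mul_nonneg (hU 0) (hW 0)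
  | succ n ih =>
    rw [Finset.sum_range_succ]
    nlinarith [mul_nonneg (sub_nonneg.2 (hUmono n)) (hW (n+1))]

/-- d_i(z) ≥ 0 for monotone z ≤ 1 -/
lemma diff_nonneg {n : ℕ} (z : Fin n → ℝ) (hzmono : Monotone z)
    (hz : ∀ i, z i ∈ Set.Icc (0:ℝ) 1) {i : ℕ} (hi : i < n) :
    0 ≤ ext1 z (i+1) - ext1 z i := by
  simp only [ext1, dif_pos hi]
  by_cases h : i + 1 < n
  · rw [dif_pos h]
    exact sub_nonneg.2 (hzmono (by simp))
  · rw [dif_neg h]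
    exact sub_nonneg.2 (hz _).2

lemma mInd_le_mInd {n : ℕ} (y z u : Fin n → ℝ) (hyz : ∀ i, y i ≤ z i)
    (humono : Monotone u) (hu : ∀ i, u i ∈ Set.Icc (0:ℝ) 1) :
    mInd y u ≤ mInd z u := by
  rw [mInd_eq_range, mInd_eq_range]
  have hU : ∀ i, 0 ≤ ext1 u i := by
    intro i; unfold ext1; split
    · exact (hu _).1
    · exact zero_le_one
  have hUmono : ∀ i, ext1 u i ≤ ext1 u (i+1) := by
    intro i; unfold ext1
    by_cases h : i + 1 < n
    · rw [dif_pos h, dif_pos (Nat.lt_of_succ_lt h)]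
      exact humono (by simp)
    · rw [dif_neg h]
      by_cases h2 : i < n
      · rw [dif_pos h2]; exact (hu _).2
      · rw [dif_neg h2]
  set W : ℕ → ℝ := fun j => if h : j < n then z ⟨j, h⟩ - y ⟨j, h⟩ else 0 with hWdef
  have hW : ∀ i, 0 ≤ W i := by
    intro i; simp only [hWdef]; split
    · exact sub_nonneg.2 (hyz _)
    · exact le_refl 0
  have key := abel_aux (ext1 u) W hU hUmono hW n
  rw [hWdef] at key
  simp only [dif_neg (lt_irrefl n), mul_zero, add_zero] at key
  have hsum : ∑ i ∈ Finset.range n, ext1 u i * (W i - W (i+1))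
      = (∑ i ∈ Finset.range n, ext1 u i * (ext1 y (i+1) - ext1 y i))
        - ∑ i ∈ Finset.range n, ext1 u i * (ext1 z (i+1) - ext1 z i) := by
    rw [← Finset.sum_sub_distrib]
    refine Finset.sum_congr rfl fun i hi => ?_
    rw [Finset.mem_range] at hi
    simp only [hWdef]
    simp only [ext1, dif_pos hi]
    by_cases h : i + 1 < n
    · simp only [dif_pos h]; ring
    · simp only [dif_neg h]; ring
  rw [hsum] at key
  linarith

lemma mInd_mem_Icc {n : ℕ} (z u : Fin n → ℝ) (hzmono : Monotone z)
    (hz : ∀ i, z i ∈ Set.Icc (0:ℝ) 1) (hu : ∀ i, u i ∈ Set.Icc (0:ℝ) 1) :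
    mInd z u ∈ Set.Icc (0:ℝ) 1 := by
  rw [mInd_eq_range]
  constructor
  · have h1 : ∑ i ∈ Finset.range n, ext1 u i * (ext1 z (i+1) - ext1 z i)
        ≤ ∑ i ∈ Finset.range n, (ext1 z (i+1) - ext1 z i) := by
      refine Finset.sum_le_sum fun i hi => ?_
      rw [Finset.mem_range] at hi
      have hd := diff_nonneg z hzmono hz hi
      have hu1 : ext1 u i ≤ 1 := by
        unfold ext1
        by_cases h2 : i < n
        · rw [dif_pos h2]; exact (hu _).2
        · rw [dif_neg h2]
      nlinarith
    have h2 : ∑ i ∈ Finset.range n, (ext1 z (i+1) - ext1 z i) = ext1 z n - ext1 z 0 :=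
      Finset.sum_range_sub (fun j => ext1 z j) n
    have h3 : ext1 z n = 1 := by simp [ext1]
    have h4 : 0 ≤ ext1 z 0 := by
      unfold ext1; split
      · exact (hz _).1
      · exact zero_le_one
    rw [h2, h3] at h1
    linarith
  · have h1 : 0 ≤ ∑ i ∈ Finset.range n, ext1 u i * (ext1 z (i+1) - ext1 z i) := by
      refine Finset.sum_nonneg fun i hi => ?_
      rw [Finset.mem_range] at hi
      refine mul_nonneg ?_ (diff_nonneg z hzmono hz hi)
      unfold ext1
      by_cases h2 : i < n
      · rw [dif_pos h2]; exact (hu _).1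
      · rw [dif_neg h2]; exact zero_le_one
    linarith

lemma sortVec_mem {n : ℕ} (ω : Fin n → ℝ)
    (hω : ω ∈ Set.pi Set.univ fun _ : Fin n => Set.Icc (0:ℝ) 1) :
    ∀ i, sortVec ω i ∈ Set.Icc (0:ℝ) 1 := fun i => hω _ (Set.mem_univ _)

/-- Monotonicity of m_α(z) in z, where m_α(z) is the (1-α)-quantile of m(z,U) and U
are the order statistics of n i.i.d. Uniform[0,1] random variables. -/
theorem stmt3 (n : ℕ) (y z : Fin n → ℝ)
    (hymono : Monotone y) (hy : ∀ i, y i ∈ Set.Icc (0:ℝ) 1)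
    (hzmono : Monotone z) (hz : ∀ i, z i ∈ Set.Icc (0:ℝ) 1)
    (hyz : ∀ i, y i ≤ z i) (α : ℝ) (hα : α ∈ Set.Icc (0:ℝ) 1) :
    mAlpha α y ≤ mAlpha α z := by
  set μ := unifCube n with hμ
  set cube : Set (Fin n → ℝ) := Set.pi Set.univ fun _ : Fin n => Set.Icc (0:ℝ) 1 with hcube
  have hcube_meas : MeasurableSet cube :=
    MeasurableSet.univ_pi fun _ => measurableSet_Icc
  have hIcc : (volume.restrict (Set.Icc (0:ℝ) 1)) (Set.Icc (0:ℝ) 1) = 1 := by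
    rw [Measure.restrict_apply measurableSet_Icc]
    simp [Real.volume_Icc]
  have hcube_one : μ cube = 1 := by
    rw [hμ, unifCube, hcube, Measure.pi_pi]
    simp [hIcc]
  have huniv : μ Set.univ = 1 := by
    rw [hμ, unifCube, Measure.pi_univ]
    have : (volume.restrict (Set.Icc (0:ℝ) 1)) Set.univ = 1 := by
      rw [Measure.restrict_apply MeasurableSet.univ]
      simp [Real.volume_Icc]
    simp [this]
  have hcompl : μ cubeᶜ = 0 := by
    rw [measure_compl hcube_meas (by rw [hcube_one]; exact ENNReal.one_ne_top)]
    rw [huniv, hcube_one, tsub_self]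
  -- pointwise inequality on the cube
  have hpt : ∀ ω ∈ cube, mInd y (sortVec ω) ≤ mInd z (sortVec ω) := fun ω hω =>
    mInd_le_mInd y z (sortVec ω) hyz (Tuple.monotone_sort ω) (sortVec_mem ω hω)
  -- set inclusion up to null set
  have hsubset : ∀ t : ℝ, {ω | mInd z (sortVec ω) ≤ t} ⊆ {ω | mInd y (sortVec ω) ≤ t} ∪ cubeᶜ := by
    intro t ω hωt
    by_cases hω : ω ∈ cube
    · exact Or.inl (le_trans (hpt ω hω) hωt)
    · exact Or.inr hω
  have hmeasle : ∀ t : ℝ, μ {ω | mInd z (sortVec ω) ≤ t} ≤ μ {ω | mInd y (sortVec ω) ≤ t} := by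
    intro t
    calc μ {ω | mInd z (sortVec ω) ≤ t}
        ≤ μ ({ω | mInd y (sortVec ω) ≤ t} ∪ cubeᶜ) := measure_mono (hsubset t)
      _ ≤ μ {ω | mInd y (sortVec ω) ≤ t} + μ cubeᶜ := measure_union_le _ _
      _ = μ {ω | mInd y (sortVec ω) ≤ t} := by rw [hcompl, add_zero]
  set Sy := {t : ℝ | ENNReal.ofReal (1 - α) ≤ μ {ω | mInd y (sortVec ω) ≤ t}} with hSy
  set Sz := {t : ℝ | ENNReal.ofReal (1 - α) ≤ μ {ω | mInd z (sortVec ω) ≤ t}} with hSz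
  have hsub : Sz ⊆ Sy := fun t ht => le_trans ht (hmeasle t)
  have hne : (1:ℝ) ∈ Sz := by
    rw [hSz]
    have : cube ⊆ {ω | mInd z (sortVec ω) ≤ 1} := fun ω hω =>
      (mInd_mem_Icc z (sortVec ω) hzmono hz (sortVec_mem ω hω)).2
    calc ENNReal.ofReal (1 - α) ≤ 1 := ENNReal.ofReal_le_one.2 (by linarith [hα.1])
      _ = μ cube := hcube_one.symm
      _ ≤ _ := measure_mono this
  by_cases hα1 : α = 1
  · have h0 : ENNReal.ofReal (1 - α) = 0 := by simp [hα1]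
    have : Sy = Sz := by
      rw [hSy, hSz, h0]
      ext t; simp
    unfold mAlpha quant
    rw [← hSy, ← hSz, this]
  · have hαlt : α < 1 := lt_of_le_of_ne hα.2 hα1
    have hpos : 0 < ENNReal.ofReal (1 - α) := ENNReal.ofReal_pos.2 (by linarith)
    have hbdd : BddBelow Sy := by
      refine ⟨0, fun t ht => ?_⟩
      by_contra hlt
      push_neg at hlt
      have hempty : {ω | mInd y (sortVec ω) ≤ t} ⊆ cubeᶜ := by
        intro ω hωt
        intro hω
        have := (mInd_mem_Icc y (sortVec ω) hymono hy (sortVec_mem ω hω)).1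
        exact absurd (le_trans this hωt) (not_le.2 hlt)
      have : μ {ω | mInd y (sortVec ω) ≤ t} = 0 :=
        le_antisymm (le_trans (measure_mono hempty) hcompl.le) zero_le
      have ht' : ENNReal.ofReal (1 - α) ≤ μ {ω | mInd y (sortVec ω) ≤ t} := ht
      rw [this] at ht'
      exact absurd ht' (not_le.2 hpos)
    unfold mAlpha quant
    rw [← hSy, ← hSz]
    exact csInf_le_csInf hbdd ⟨1, hne⟩ hsub
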